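/- Let G be a finite connected simple graph with n vertices and m edges, all of whose vertices have degree at least 1. Then for every complex number λ, (λ² − 1)^n · det(λ·I_{2m} − U) = (λ² − 1)^m · det((λ² + 1)·I_n − 2λ·T(G)), where I_{2m} is the identity matrix indexed by the darts of G and I_n the identity matrix indexed by the vertices. (This is the first equality of Theorem 4.1, with the factor (λ²−1)^{m−n} cleared of negative exponents.) -/

import Mathlib

open Matrix SimpleGraph

/-- The matrix `T(G)`: `T u v = 1 / deg u` if `(u,v)` is a dart of `G`, else `0`. -/
noncomputable def quantumT {V : Type*} [Fintype V] (G : SimpleGraph V)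
    [DecidableRel G.Adj] : Matrix V V ℂ :=
  fun u v => if G.Adj u v then (1 : ℂ) / (G.degree u : ℂ) else 0

/-- The transition matrix `U` of the discrete-time quantum walk on `G`, indexed by darts:
`U e f = 2 / deg (t f)` if `t f = o e` and `f ≠ e⁻¹`, `U e f = 2 / deg (t f) - 1` if
`f = e⁻¹`, and `0` otherwise. -/
noncomputable def quantumU {V : Type*} [Fintype V] (G : SimpleGraph V)
    [DecidableRel G.Adj] [DecidableEq V] : Matrix G.Dart G.Dart ℂ :=
  fun e f =>
    if f.toProd.2 = e.toProd.1 ∧ f ≠ e.symm then (2 : ℂ) / (G.degree f.toProd.2 : ℂ)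
    else if f = e.symm then (2 : ℂ) / (G.degree f.toProd.2 : ℂ) - 1
    else 0

section Aux

variable {V : Type*} [Fintype V] [DecidableEq V] (G : SimpleGraph V) [DecidableRel G.Adj]

/-- Origin indicator matrix. -/
noncomputable def qC : Matrix G.Dart V ℂ := fun e v => if e.toProd.1 = v then 1 else 0

/-- Weighted terminus indicator matrix. -/
noncomputable def qD : Matrix V G.Dart ℂ :=
  fun v f => if f.toProd.2 = v then (2 : ℂ) / (G.degree v : ℂ) else 0

/-- Dart-reversal permutation matrix. -/
noncomputable def qS : Matrix G.Dart G.Dart ℂ := fun e f => if f = e.symm then 1 else 0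

lemma qS_mul_qS : qS G * qS G = 1 := by
  ext e f
  simp only [Matrix.mul_apply, qS, ite_mul, one_mul, zero_mul]
  rw [Finset.sum_ite_eq' Finset.univ e.symm (fun g => if f = g.symm then (1:ℂ) else 0)]
  simp [Matrix.one_apply, eq_comm]

lemma quantumU_eq : quantumU G = qC G * qD G - qS G := by
  ext e f
  simp only [Matrix.sub_apply, Matrix.mul_apply, qC, qD, qS, ite_mul, one_mul, zero_mul]
  rw [Finset.sum_ite_eq Finset.univ e.toProd.1
    (fun v => if f.toProd.2 = v then (2:ℂ) / (G.degree v : ℂ) else 0)]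
  simp only [Finset.mem_univ, if_true]
  unfold quantumU
  by_cases h2 : f = e.symm
  · subst h2
    have ht : e.symm.toProd.2 = e.toProd.1 := rfl
    simp [ht]
    rfl
  · by_cases h1 : f.toProd.2 = e.toProd.1
    · rw [h1]; simp [h2]
    · simp [h1, h2]

lemma qD_mul_qC : qD G * qC G = (2 : ℂ) • quantumT G := by
  ext v w
  simp only [Matrix.mul_apply, qD, qC, Matrix.smul_apply, quantumT, smul_eq_mul,
    mul_ite, mul_one, mul_zero, ite_mul, zero_mul]
  by_cases hadj : G.Adj w v
  · have hsum : ∀ f : G.Dart,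
        (if f.toProd.1 = w then (if f.toProd.2 = v then (2:ℂ) / (G.degree v : ℂ) else 0) else 0)
          = if f = (⟨(w, v), hadj⟩ : G.Dart) then (2:ℂ) / (G.degree v : ℂ) else 0 := by
      intro f
      by_cases hf : f = (⟨(w, v), hadj⟩ : G.Dart)
      · subst hf; simp
      · have hne : ¬(f.toProd.2 = v ∧ f.toProd.1 = w) := by
          rintro ⟨h1', h2'⟩
          exact hf (SimpleGraph.Dart.ext f _ (Prod.ext h2' h1'))
        by_cases h1 : f.toProd.2 = v <;> by_cases h2 : f.toProd.1 = w <;>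
          simp_all
    rw [Finset.sum_congr rfl fun f _ => hsum f,
      Finset.sum_ite_eq' Finset.univ _ (fun _ => (2:ℂ) / (G.degree v : ℂ))]
    have hvw : G.Adj v w := hadj.symm
    simp [hvw, div_eq_mul_inv]
  · have hvw : ¬ G.Adj v w := fun h => hadj h.symm
    simp only [hvw, if_false, mul_zero]
    apply Finset.sum_eq_zero
    intro f _
    by_cases h2 : f.toProd.1 = w
    · by_cases h1 : f.toProd.2 = v
      · exact absurd (by rw [← h2, ← h1]; exact f.adj) hadj
      · simp [h1, h2]
    · simp [h2]

lemma qS_mul_qC : qS G * qC G = fun f w => if f.toProd.2 = w then (1:ℂ) else 0 := by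
  ext f w
  simp only [Matrix.mul_apply, qS, qC, ite_mul, one_mul, zero_mul]
  rw [Finset.sum_ite_eq' Finset.univ f.symm (fun g => if g.toProd.1 = w then (1:ℂ) else 0)]
  simp only [Finset.mem_univ, if_true]
  rfl

lemma card_snd_fiber (v : V) :
    (Finset.univ.filter (fun f : G.Dart => f.toProd.2 = v)).card = G.degree v := by
  rw [← SimpleGraph.dart_fst_fiber_card_eq_degree G v]
  apply Finset.card_bij' (fun f _ => f.symm) (fun f _ => f.symm) <;>
    intro f hf <;> simp_all

lemma qD_mul_qS_mul_qC (hdeg : ∀ v : V, 1 ≤ G.degree v) :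
    qD G * (qS G * qC G) = (2 : ℂ) • 1 := by
  rw [qS_mul_qC]
  ext v w
  erw [Matrix.mul_apply]
  simp only [Matrix.mul_apply, qD, Matrix.smul_apply, Matrix.one_apply, smul_eq_mul,
    mul_ite, mul_one, mul_zero, ite_mul, zero_mul]
  by_cases hvw : v = w
  · subst hvw
    have hsum : ∀ f : G.Dart,
        (if f.toProd.2 = v then (if f.toProd.2 = v then (2:ℂ) / (G.degree v : ℂ) else 0) else 0)
          = if f.toProd.2 = v then (2:ℂ) / (G.degree v : ℂ) else 0 := by
      intro f; by_cases h : f.toProd.2 = v <;> simp [h]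
    rw [Finset.sum_congr rfl fun f _ => hsum f, ← Finset.sum_filter, Finset.sum_const,
      card_snd_fiber]
    have hd : (G.degree v : ℂ) ≠ 0 := Nat.cast_ne_zero.mpr (by have := hdeg v; omega)
    simp only [nsmul_eq_mul, if_pos rfl]
    field_simp
    rw [if_pos trivial]
  · simp only [hvw, if_false]
    apply Finset.sum_eq_zero
    intro f _
    have hvw' : ¬ w = v := fun h => hvw h.symm
    by_cases h1 : f.toProd.2 = v <;> by_cases h2 : f.toProd.2 = w
    · exact (hvw (h1.symm.trans h2)).elim
    · simp [h1, h2, hvw, hvw']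
    · simp [h1, h2, hvw, hvw']
    · simp [h1, h2, hvw, hvw']

/-- Weinstein–Aronszajn-style identity with a scalar. -/
lemma detAux {a b : Type*} [Fintype a] [Fintype b] [DecidableEq a] [DecidableEq b]
    (α : ℂ) (hα : α ≠ 0) (M : Matrix a b ℂ) (N : Matrix b a ℂ) :
    α ^ Fintype.card b * (α • (1 : Matrix a a ℂ) - M * N).det
      = α ^ Fintype.card a * (α • (1 : Matrix b b ℂ) - N * M).det := by
  have h1 : α • (1 : Matrix a a ℂ) - M * N = α • ((1 : Matrix a a ℂ) + (-M) * (α⁻¹ • N)) := by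
    rw [Matrix.mul_smul, Matrix.neg_mul, smul_add, smul_neg, smul_neg, smul_smul,
      mul_inv_cancel₀ hα, one_smul, sub_eq_add_neg]
  have h2 : α • (1 : Matrix b b ℂ) - N * M = α • ((1 : Matrix b b ℂ) + (α⁻¹ • N) * (-M)) := by
    rw [Matrix.smul_mul, Matrix.mul_neg, smul_add, smul_neg, smul_neg, smul_smul,
      mul_inv_cancel₀ hα, one_smul, sub_eq_add_neg]
  rw [h1, h2, Matrix.det_smul, Matrix.det_smul, Matrix.det_one_add_mul_comm]
  ring

lemma det_lam_smul_one_sub_qS (lam : ℂ) :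
    (lam • (1 : Matrix G.Dart G.Dart ℂ) - qS G).det = (lam ^ 2 - 1) ^ G.edgeFinset.card := by
  classical
  set κ : V → ℕ := fun v => ((Fintype.equivFin V) v : ℕ) with hκ
  have hκinj : Function.Injective κ := fun u v h =>
    (Fintype.equivFin V).injective (Fin.val_injective h)
  set β : G.Dart → Bool := fun d => decide (κ d.toProd.1 < κ d.toProd.2) with hβdef
  have hβsymm : ∀ d : G.Dart, β d.symm = !β d := by
    intro d
    have hne : κ d.toProd.1 ≠ κ d.toProd.2 := fun h => d.adj.ne (hκinj h)
    simp only [hβdef, SimpleGraph.Dart.symm_toProd, Prod.snd_swap, Prod.fst_swap]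
    rcases lt_trichotomy (κ d.toProd.1) (κ d.toProd.2) with h | h | h
    · simp [h, not_lt.mpr h.le]
    · exact absurd h hne
    · simp [h, not_lt.mpr h.le]
  set φ : G.Dart → {s // s ∈ G.edgeFinset} × Bool :=
    fun d => (⟨d.edge, by simp [SimpleGraph.mem_edgeFinset]⟩, β d) with hφdef
  have hinj : Function.Injective φ := by
    intro d d' h
    have h1 : d.edge = d'.edge := congrArg (fun p => (p.1 : Sym2 V)) h
    have h2 : β d = β d' := congrArg Prod.snd h
    rcases (SimpleGraph.dart_edge_eq_iff d d').mp h1 with h3 | h3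
    · exact h3
    · exfalso
      rw [h3, hβsymm] at h2
      exact (Bool.not_ne_self (β d')).symm h2.symm
  have hsurj : Function.Surjective φ := by
    rintro ⟨⟨s, hs⟩, b⟩
    rw [SimpleGraph.mem_edgeFinset] at hs
    induction s using Sym2.ind with
    | _ u v =>
      have hadj : G.Adj u v := hs
      set d0 : G.Dart := ⟨(u, v), hadj⟩ with hd0
      have hedge0 : d0.edge = s(u, v) := rfl
      by_cases hb : b = β d0
      · exact ⟨d0, by simp [hφdef, Subtype.ext_iff, hedge0, hb]⟩
      · have hb' : b = !β d0 := by
          cases hbd : β d0 <;> cases hbb : b <;> simp_all <;> exact absurd hbd (not_lt.mpr hb)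
        exact ⟨d0.symm, by
          simp [hφdef, Subtype.ext_iff, hb', hβsymm, SimpleGraph.Dart.edge_symm, hedge0]⟩
  set e : G.Dart ≃ {s // s ∈ G.edgeFinset} × Bool := Equiv.ofBijective φ ⟨hinj, hsurj⟩ with he
  set B : Matrix Bool Bool ℂ := fun b b' => if b = b' then lam else -1 with hB
  have hfst : ∀ d : G.Dart, ((e d).1 : Sym2 V) = d.edge := fun _ => rfl
  have hsnd : ∀ d : G.Dart, (e d).2 = β d := fun _ => rfl
  have hre : (Matrix.reindex e e) (lam • (1 : Matrix G.Dart G.Dart ℂ) - qS G)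
      = Matrix.kroneckerMap (· * ·)
          (1 : Matrix {s // s ∈ G.edgeFinset} {s // s ∈ G.edgeFinset} ℂ) B := by
    ext x y
    obtain ⟨d, rfl⟩ := e.surjective x
    obtain ⟨d', rfl⟩ := e.surjective y
    rw [Matrix.reindex_apply, Matrix.submatrix_apply, Equiv.symm_apply_apply,
      Equiv.symm_apply_apply, Matrix.kroneckerMap_apply]
    by_cases h1 : d' = d
    · subst h1
      have hdd : ¬ (d' = d'.symm) := (SimpleGraph.Dart.symm_ne d').symm
      simp [Matrix.sub_apply, Matrix.smul_apply, Matrix.one_apply, qS, hdd, hB]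
    · by_cases h2 : d' = d.symm
      · subst h2
        have hne : ¬ (d = d.symm) := (SimpleGraph.Dart.symm_ne d).symm
        have hE : (e d).1 = (e d.symm).1 :=
          Subtype.ext (by rw [hfst, hfst, SimpleGraph.Dart.edge_symm])
        have hb2 : (e d.symm).2 = !(e d).2 := by rw [hsnd, hsnd, hβsymm]
        have hbne : ¬ ((e d).2 = (e d.symm).2) := by rw [hb2]; simp
        rw [hE]
        simp [Matrix.sub_apply, Matrix.smul_apply, Matrix.one_apply, qS, hne, hB, hbne]
      · have hEne : ¬ ((e d).1 = (e d').1) := by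
          intro h
          have h' : d.edge = d'.edge := by rw [← hfst, ← hfst, h]
          rcases (SimpleGraph.dart_edge_eq_iff d d').mp h' with h3 | h3
          · exact h1 h3.symm
          · exact h2 (by rw [h3, SimpleGraph.Dart.symm_symm])
        have h1' : ¬ (d = d') := fun h => h1 h.symm
        simp [Matrix.sub_apply, Matrix.smul_apply, Matrix.one_apply, qS, h1', h2, hEne]
  have hdet := Matrix.det_reindex_self e (lam • (1 : Matrix G.Dart G.Dart ℂ) - qS G)
  rw [hre] at hdet
  have hBdet : B.det = lam ^ 2 - 1 := by
    rw [← Matrix.det_submatrix_equiv_self finTwoEquiv B, Matrix.det_fin_two]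
    simp only [Matrix.submatrix_apply]
    simp [hB, finTwoEquiv]
    ring
  rw [← hdet, Matrix.det_kronecker, hBdet, Matrix.det_one, one_pow, one_mul,
    Fintype.card_coe]

end Aux

theorem stmt0 {V : Type*} [Fintype V] [DecidableEq V] (G : SimpleGraph V)
    [DecidableRel G.Adj] (hconn : G.Connected) (hdeg : ∀ v : V, 1 ≤ G.degree v)
    (lam : ℂ) :
    (lam ^ 2 - 1) ^ (Fintype.card V) *
        (lam • (1 : Matrix G.Dart G.Dart ℂ) - quantumU G).det =
      (lam ^ 2 - 1) ^ G.edgeFinset.card *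
        ((lam ^ 2 + 1) • (1 : Matrix V V ℂ) - (2 * lam) • quantumT G).det := by
  classical
  by_cases hα : lam ^ 2 - 1 = 0
  · have hne : Nonempty V := hconn.nonempty
    have hn : Fintype.card V ≠ 0 := Fintype.card_ne_zero
    have hm : G.edgeFinset.card ≠ 0 := by
      obtain ⟨v⟩ := hconn.nonempty
      obtain ⟨w, hw⟩ := (SimpleGraph.degree_pos_iff_exists_adj G v).mp (hdeg v)
      have : s(v, w) ∈ G.edgeFinset := by
        rw [SimpleGraph.mem_edgeFinset, SimpleGraph.mem_edgeSet]; exact hw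
      exact Finset.card_ne_zero_of_mem this
    rw [hα, zero_pow hn, zero_pow hm, zero_mul, zero_mul]
  · set B' : Matrix V G.Dart ℂ := lam • qD G - qD G * qS G with hB'
    have key1 : (lam • (1 : Matrix G.Dart G.Dart ℂ) - quantumU G) *
        (lam • (1 : Matrix G.Dart G.Dart ℂ) - qS G)
        = (lam ^ 2 - 1) • (1 : Matrix G.Dart G.Dart ℂ) - qC G * B' := by
      rw [quantumU_eq, hB']
      simp only [Matrix.mul_sub, Matrix.sub_mul, Matrix.smul_mul, Matrix.mul_smul,
        Matrix.mul_one, Matrix.one_mul, Matrix.mul_assoc, qS_mul_qS]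
      module
    have hBC : (lam ^ 2 - 1) • (1 : Matrix V V ℂ) - B' * qC G
        = (lam ^ 2 + 1) • (1 : Matrix V V ℂ) - (2 * lam) • quantumT G := by
      rw [hB', Matrix.sub_mul, Matrix.smul_mul, qD_mul_qC, Matrix.mul_assoc,
        qD_mul_qS_mul_qC G hdeg]
      module
    have hdetmul : (lam • (1 : Matrix G.Dart G.Dart ℂ) - quantumU G).det *
        (lam • (1 : Matrix G.Dart G.Dart ℂ) - qS G).det
        = ((lam ^ 2 - 1) • (1 : Matrix G.Dart G.Dart ℂ) - qC G * B').det := by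
      rw [← Matrix.det_mul, key1]
    have hswap := detAux (lam ^ 2 - 1) hα (qC G) B'
    have hdetS := det_lam_smul_one_sub_qS G lam
    have hcard : Fintype.card G.Dart = 2 * G.edgeFinset.card :=
      SimpleGraph.dart_card_eq_twice_card_edges G
    apply mul_right_cancel₀ (pow_ne_zero G.edgeFinset.card hα)
    calc (lam ^ 2 - 1) ^ (Fintype.card V) *
          (lam • (1 : Matrix G.Dart G.Dart ℂ) - quantumU G).det *
          (lam ^ 2 - 1) ^ G.edgeFinset.card
        = (lam ^ 2 - 1) ^ (Fintype.card V) *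
            ((lam • (1 : Matrix G.Dart G.Dart ℂ) - quantumU G).det *
              (lam • (1 : Matrix G.Dart G.Dart ℂ) - qS G).det) := by
          rw [← hdetS]; ring
      _ = (lam ^ 2 - 1) ^ (Fintype.card V) *
            ((lam ^ 2 - 1) • (1 : Matrix G.Dart G.Dart ℂ) - qC G * B').det := by
          rw [hdetmul]
      _ = (lam ^ 2 - 1) ^ (Fintype.card G.Dart) *
            ((lam ^ 2 - 1) • (1 : Matrix V V ℂ) - B' * qC G).det := hswap
      _ = (lam ^ 2 - 1) ^ G.edgeFinset.card *
            ((lam ^ 2 + 1) • (1 : Matrix V V ℂ) - (2 * lam) • quantumT G).det *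
            (lam ^ 2 - 1) ^ G.edgeFinset.card := by
          rw [hBC, hcard, two_mul, pow_add]; ring
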